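/- Let t > 0, 0 ≤ s ≤ t and R ≥ 2t. Then ∫_s^t ∫_{ℝ³} φ_{t−r,R}(z)²·φ_{t−s,R}(y)·φ_{t−s,R}(y')·1_{{|y−z| ≤ r−s}}·1_{{|y'−z| ≤ r−s}} dy dy' dz dr ≤ (8/3)·t⁷·R. -/

import Mathlib

open MeasureTheory Real intervalIntegral

/-- `φ_{a,R}(y) = (1/2) ∫_{-R}^R 1_{|x-y|≤a} dx`. -/
noncomputable def phi (a R y : ℝ) : ℝ :=
  (1/2) * ∫ x in (-R)..R, if |x - y| ≤ a then (1:ℝ) else 0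

lemma phi_eq (a R y : ℝ) (hR : 0 ≤ R) :
    phi a R y = (1/2) * (volume (Set.Ioc (-R) R ∩ Metric.closedBall y a)).toReal := by
  have h1 : (fun x => if |x - y| ≤ a then (1:ℝ) else 0)
      = (Metric.closedBall y a).indicator (fun _ => (1:ℝ)) := by
    funext x
    simp [Set.indicator, Metric.mem_closedBall, Real.dist_eq]
  rw [phi, intervalIntegral.integral_of_le (by linarith : -R ≤ R), h1,
    setIntegral_indicator measurableSet_closedBall, setIntegral_const]
  simp [measureReal_def]

lemma phi_nonneg (a R y : ℝ) (hR : 0 ≤ R) : 0 ≤ phi a R y := by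
  rw [phi_eq a R y hR]; positivity

lemma phi_le (a R y : ℝ) (hR : 0 ≤ R) (ha : 0 ≤ a) : phi a R y ≤ a := by
  rw [phi_eq a R y hR]
  have h : volume (Set.Ioc (-R) R ∩ Metric.closedBall y a) ≤ ENNReal.ofReal (2 * a) := by
    rw [← Real.volume_closedBall y a]
    exact measure_mono Set.inter_subset_right
  have := ENNReal.toReal_le_of_le_ofReal (by linarith) h
  linarith

/-- The product set whose slices give `phi`. -/
lemma phi_set_measurable (a R : ℝ) :
    MeasurableSet {p : ℝ × ℝ | p.2 ∈ Set.Ioc (-R) R ∧ dist p.2 p.1 ≤ a} := by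
  apply MeasurableSet.inter
  · exact measurable_snd measurableSet_Ioc
  · exact measurableSet_le (measurable_snd.dist measurable_fst) measurable_const

lemma phi_slice (a R z : ℝ) :
    Prod.mk z ⁻¹' {p : ℝ × ℝ | p.2 ∈ Set.Ioc (-R) R ∧ dist p.2 p.1 ≤ a}
      = Set.Ioc (-R) R ∩ Metric.closedBall z a := by
  ext x
  simp [Metric.mem_closedBall, dist_comm]

lemma phi_measurable (a R : ℝ) (hR : 0 ≤ R) : Measurable (fun z => phi a R z) := by
  have h := measurable_measure_prodMk_left (ν := (volume : Measure ℝ)) (phi_set_measurable a R)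
  have h2 : Measurable fun z => (volume (Set.Ioc (-R) R ∩ Metric.closedBall z a)).toReal := by
    apply ENNReal.measurable_toReal.comp
    simpa only [phi_slice] using h
  simpa only [phi_eq _ _ _ hR] using h2.const_mul _

lemma phi_zero_of_far (a R z : ℝ) (hz : R + a < |z|) (hR : 0 ≤ R) : phi a R z = 0 := by
  rw [phi_eq a R z hR]
  have : Set.Ioc (-R) R ∩ Metric.closedBall z a = ∅ := by
    ext x
    simp only [Set.mem_inter_iff, Set.mem_Ioc, Metric.mem_closedBall, Real.dist_eq,
      Set.mem_empty_iff_false, iff_false, not_and, and_imp]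
    intro h1 h2 h3
    have hx : |x| ≤ R := abs_le.2 ⟨le_of_lt h1, h2⟩
    have : |z| ≤ |x - z| + |x| := by
      have := abs_sub_abs_le_abs_sub z x
      have : |z - x| = |x - z| := abs_sub_comm z x
      calc |z| ≤ |z - x| + |x| := by
            have := abs_sub_abs_le_abs_sub z x; linarith [abs_nonneg x]
        _ = |x - z| + |x| := by rw [abs_sub_comm]
    linarith
  simp [this]

lemma phi_integrable (a R : ℝ) (hR : 0 ≤ R) (ha : 0 ≤ a) :
    Integrable (fun z => phi a R z) := by
  apply Integrable.mono' (g := (Set.Icc (-(R + a)) (R + a)).indicator (fun _ => a))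
  · exact (integrable_indicator_iff measurableSet_Icc).2
      ((integrableOn_const_iff (by simp)).2 (Or.inr (by simp)))
  · exact (phi_measurable a R hR).aestronglyMeasurable
  · refine Filter.Eventually.of_forall fun z => ?_
    rw [Real.norm_eq_abs, abs_of_nonneg (phi_nonneg a R z hR)]
    by_cases hz : z ∈ Set.Icc (-(R + a)) (R + a)
    · rw [Set.indicator_of_mem hz]; exact phi_le a R z hR ha
    · rw [Set.indicator_of_notMem hz]
      have : R + a < |z| := by
        simp only [Set.mem_Icc, not_and_or, not_le] at hz
        rcases hz with h | h
        · rw [abs_of_neg (by linarith)]; linarith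
        · rw [abs_of_pos (by linarith)]; linarith
      rw [phi_zero_of_far a R z this hR]

lemma integral_phi_le (a R : ℝ) (hR : 0 ≤ R) (ha : 0 ≤ a) :
    ∫ z, phi a R z ≤ 2 * R * a := by
  have hS := phi_set_measurable a R
  set ν : ℝ → ENNReal := fun z => volume (Set.Ioc (-R) R ∩ Metric.closedBall z a) with hν
  have hνm : Measurable ν := by
    simpa only [phi_slice] using measurable_measure_prodMk_left (ν := (volume : Measure ℝ)) hS
  have hνlt : ∀ z, ν z < ⊤ := fun z =>
    lt_of_le_of_lt (measure_mono Set.inter_subset_left) measure_Ioc_lt_top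
  have heq : ∫ z, phi a R z = (1/2) * (∫⁻ z, ν z).toReal := by
    simp only [phi_eq _ _ _ hR]
    rw [MeasureTheory.integral_const_mul, integral_toReal hνm.aemeasurable
      (Filter.Eventually.of_forall hνlt)]
  rw [heq]
  have hprod : ∫⁻ z, ν z =
      (volume.prod volume) {p : ℝ × ℝ | p.2 ∈ Set.Ioc (-R) R ∧ dist p.2 p.1 ≤ a} := by
    rw [Measure.prod_apply hS]
    simp only [phi_slice, hν]
  have hval : (volume.prod volume) {p : ℝ × ℝ | p.2 ∈ Set.Ioc (-R) R ∧ dist p.2 p.1 ≤ a}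
      = ENNReal.ofReal (2 * R) * ENNReal.ofReal (2 * a) := by
    rw [Measure.prod_apply_symm hS]
    have : ∀ x : ℝ, volume ((fun z => (z, x)) ⁻¹' {p : ℝ × ℝ | p.2 ∈ Set.Ioc (-R) R ∧ dist p.2 p.1 ≤ a})
        = (Set.Ioc (-R) R).indicator (fun _ => ENNReal.ofReal (2 * a)) x := by
      intro x
      by_cases hx : x ∈ Set.Ioc (-R) R
      · rw [Set.indicator_of_mem hx]
        obtain ⟨hx1, hx2⟩ := hx
        have : ((fun z => (z, x)) ⁻¹' {p : ℝ × ℝ | p.2 ∈ Set.Ioc (-R) R ∧ dist p.2 p.1 ≤ a})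
            = Metric.closedBall x a := by
          ext z
          simp [Set.mem_preimage, Set.mem_Ioc, hx1, hx2, Metric.mem_closedBall, dist_comm]
        rw [this, Real.volume_closedBall]
      · rw [Set.indicator_of_notMem hx]
        have hemp : ((fun z => (z, x)) ⁻¹' {p : ℝ × ℝ | p.2 ∈ Set.Ioc (-R) R ∧ dist p.2 p.1 ≤ a})
            = (∅ : Set ℝ) := by
          ext z
          simp only [Set.mem_preimage, Set.mem_setOf_eq, Set.mem_empty_iff_false, iff_false]
          exact fun h => hx h.1
        rw [hemp]
        exact measure_empty
    rw [lintegral_congr this, lintegral_indicator measurableSet_Ioc]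
    rw [setLIntegral_const, Real.volume_Ioc]
    have h2R : R - -R = 2 * R := by ring
    rw [h2R, mul_comm]
  rw [hprod, hval, ← ENNReal.ofReal_mul (by linarith)]
  rw [ENNReal.toReal_ofReal (by positivity)]
  nlinarith

lemma phi_sq_integrable (a R : ℝ) (hR : 0 ≤ R) (ha : 0 ≤ a) :
    Integrable (fun z => (phi a R z) ^ 2) := by
  apply Integrable.mono' ((phi_integrable a R hR ha).const_mul a)
  · exact ((phi_measurable a R hR).pow_const 2).aestronglyMeasurable
  · refine Filter.Eventually.of_forall fun z => ?_
    rw [Real.norm_eq_abs, abs_of_nonneg (by positivity)]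
    have h1 := phi_nonneg a R z hR
    have h2 := phi_le a R z hR ha
    nlinarith [mul_nonneg (sub_nonneg.2 h2) h1]

lemma integral_phi_sq_le (a R : ℝ) (hR : 0 ≤ R) (ha : 0 ≤ a) :
    ∫ z, (phi a R z) ^ 2 ≤ 2 * R * a ^ 2 := by
  have h1 : ∫ z, (phi a R z) ^ 2 ≤ ∫ z, a * phi a R z := by
    apply integral_mono_of_nonneg
    · exact Filter.Eventually.of_forall fun z => by positivity
    · exact (phi_integrable a R hR ha).const_mul a
    · refine Filter.Eventually.of_forall fun z => ?_
      dsimp only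
      have h1 := phi_nonneg a R z hR
      have h2 := phi_le a R z hR ha
      nlinarith [mul_nonneg (sub_nonneg.2 h2) h1]
  rw [MeasureTheory.integral_const_mul] at h1
  have h2 := integral_phi_le a R hR ha
  have h3 : a * ∫ z, phi a R z ≤ a * (2 * R * a) :=
    mul_le_mul_of_nonneg_left h2 ha
  nlinarith [h1, h3]

/-- Integral of the indicator `1_{|y-z|≤c}`. -/
lemma indicator_integral (z c : ℝ) (hc : 0 ≤ c) :
    ∫ y, (if |y - z| ≤ c then (1:ℝ) else 0) = 2 * c := by
  have h1 : (fun y => if |y - z| ≤ c then (1:ℝ) else 0)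
      = (Metric.closedBall z c).indicator (fun _ => (1:ℝ)) := by
    funext y
    simp [Set.indicator, Metric.mem_closedBall, Real.dist_eq]
  rw [h1, MeasureTheory.integral_indicator measurableSet_closedBall, setIntegral_const,
    measureReal_def, Real.volume_closedBall]
  rw [smul_eq_mul, mul_one, ENNReal.toReal_ofReal (by linarith)]

lemma indicator_integrable (z c : ℝ) :
    Integrable (fun y => (if |y - z| ≤ c then (1:ℝ) else 0)) := by
  have h1 : (fun y => if |y - z| ≤ c then (1:ℝ) else 0)
      = (Metric.closedBall z c).indicator (fun _ => (1:ℝ)) := by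
    funext y
    simp [Set.indicator, Metric.mem_closedBall, Real.dist_eq]
  rw [h1]
  exact (integrable_indicator_iff measurableSet_closedBall).2
    ((integrableOn_const_iff (by simp)).2 (Or.inr (by rw [Real.volume_closedBall]; exact ENNReal.ofReal_lt_top)))

/-- For `t > 0`, `0 ≤ s ≤ t` and `R ≥ 2t`:
`∫_s^t ∫_{ℝ³} φ_{t-r,R}(z)² φ_{t-s,R}(y) φ_{t-s,R}(y') 1_{|y-z|≤r-s} 1_{|y'-z|≤r-s}
  dy dy' dz dr ≤ (8/3) t⁷ R`. -/
theorem stmt_15 (t s R : ℝ) (ht : 0 < t) (hs0 : 0 ≤ s) (hst : s ≤ t) (hR : 2 * t ≤ R) :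
    (∫ r in s..t, ∫ z : ℝ, ∫ y' : ℝ, ∫ y : ℝ,
        (phi (t - r) R z) ^ 2 * phi (t - s) R y * phi (t - s) R y' *
          (if |y - z| ≤ r - s then (1:ℝ) else 0) *
          (if |y' - z| ≤ r - s then (1:ℝ) else 0))
      ≤ (8/3) * t ^ 7 * R := by
  have hR0 : (0:ℝ) ≤ R := by linarith
  set G : ℝ → ℝ := fun r => 8 * R * t ^ 4 * (t - r) ^ 2 with hG
  -- pointwise bound `F r ≤ G r` on `Ioc s t`
  have key : ∀ r ∈ Set.Ioc s t,
      (∫ z : ℝ, ∫ y' : ℝ, ∫ y : ℝ,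
        (phi (t - r) R z) ^ 2 * phi (t - s) R y * phi (t - s) R y' *
          (if |y - z| ≤ r - s then (1:ℝ) else 0) *
          (if |y' - z| ≤ r - s then (1:ℝ) else 0)) ≤ G r := by
    intro r hr
    obtain ⟨hrs, hrt⟩ := hr
    have hrs' : 0 ≤ r - s := by linarith
    have htr : 0 ≤ t - r := by linarith
    have hts : 0 ≤ t - s := by linarith
    -- Step y: fix z, y'
    have step_y : ∀ z y' : ℝ,
        (∫ y : ℝ, (phi (t - r) R z) ^ 2 * phi (t - s) R y * phi (t - s) R y' *
          (if |y - z| ≤ r - s then (1:ℝ) else 0) *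
          (if |y' - z| ≤ r - s then (1:ℝ) else 0))
        ≤ (phi (t - r) R z) ^ 2 * phi (t - s) R y' *
          (if |y' - z| ≤ r - s then (1:ℝ) else 0) * (2 * t ^ 2) := by
      intro z y'
      have hle : (∫ y : ℝ, (phi (t - r) R z) ^ 2 * phi (t - s) R y * phi (t - s) R y' *
          (if |y - z| ≤ r - s then (1:ℝ) else 0) *
          (if |y' - z| ≤ r - s then (1:ℝ) else 0))
          ≤ ∫ y : ℝ, ((phi (t - r) R z) ^ 2 * phi (t - s) R y' *
            (if |y' - z| ≤ r - s then (1:ℝ) else 0) * t) *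
            (if |y - z| ≤ r - s then (1:ℝ) else 0) := by
        apply integral_mono_of_nonneg
        · refine Filter.Eventually.of_forall fun y => ?_
          have := phi_nonneg (t - r) R z hR0
          have := phi_nonneg (t - s) R y hR0
          have := phi_nonneg (t - s) R y' hR0
          positivity
        · exact (indicator_integrable z (r - s)).const_mul _
        · refine Filter.Eventually.of_forall fun y => ?_
          dsimp only
          have h1 := phi_nonneg (t - r) R z hR0
          have h2 := phi_nonneg (t - s) R y hR0
          have h3 := phi_nonneg (t - s) R y' hR0
          have h4 : phi (t - s) R y ≤ t := le_trans (phi_le (t - s) R y hR0 hts) (by linarith)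
          have h5 : (0:ℝ) ≤ if |y - z| ≤ r - s then (1:ℝ) else 0 := by positivity
          have h6 : (0:ℝ) ≤ if |y' - z| ≤ r - s then (1:ℝ) else 0 := by positivity
          nlinarith [mul_nonneg (mul_nonneg (mul_nonneg (mul_nonneg (sub_nonneg.2 h4)
            (sq_nonneg (phi (t - r) R z))) h3) h5) h6]
      calc _ ≤ _ := hle
        _ = ((phi (t - r) R z) ^ 2 * phi (t - s) R y' *
            (if |y' - z| ≤ r - s then (1:ℝ) else 0) * t) * (2 * (r - s)) := by
            rw [MeasureTheory.integral_const_mul, indicator_integral z (r - s) hrs']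
        _ ≤ _ := by
            have h3 := phi_nonneg (t - s) R y' hR0
            have h6 : (0:ℝ) ≤ if |y' - z| ≤ r - s then (1:ℝ) else 0 := by positivity
            have hrst : r - s ≤ t := by linarith
            nlinarith [mul_nonneg (mul_nonneg (mul_nonneg (mul_nonneg (sub_nonneg.2 hrst)
              (sq_nonneg (phi (t - r) R z))) h3) h6) ht.le]
    -- Step y': fix z
    have step_y' : ∀ z : ℝ,
        (∫ y' : ℝ, ∫ y : ℝ, (phi (t - r) R z) ^ 2 * phi (t - s) R y * phi (t - s) R y' *
          (if |y - z| ≤ r - s then (1:ℝ) else 0) *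
          (if |y' - z| ≤ r - s then (1:ℝ) else 0))
        ≤ (phi (t - r) R z) ^ 2 * (4 * t ^ 4) := by
      intro z
      have hle : (∫ y' : ℝ, ∫ y : ℝ, (phi (t - r) R z) ^ 2 * phi (t - s) R y * phi (t - s) R y' *
          (if |y - z| ≤ r - s then (1:ℝ) else 0) *
          (if |y' - z| ≤ r - s then (1:ℝ) else 0))
          ≤ ∫ y' : ℝ, ((phi (t - r) R z) ^ 2 * t * (2 * t ^ 2)) *
            (if |y' - z| ≤ r - s then (1:ℝ) else 0) := by
        apply integral_mono_of_nonneg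
        · refine Filter.Eventually.of_forall fun y' => ?_
          apply MeasureTheory.integral_nonneg
          intro y
          have := phi_nonneg (t - r) R z hR0
          have := phi_nonneg (t - s) R y hR0
          have := phi_nonneg (t - s) R y' hR0
          positivity
        · exact (indicator_integrable z (r - s)).const_mul _
        · refine Filter.Eventually.of_forall fun y' => ?_
          dsimp only
          refine le_trans (step_y z y') ?_
          have h1 := phi_nonneg (t - r) R z hR0
          have h4 : phi (t - s) R y' ≤ t :=
            le_trans (phi_le (t - s) R y' hR0 hts) (by linarith)
          have h3 := phi_nonneg (t - s) R y' hR0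
          have h6 : (0:ℝ) ≤ if |y' - z| ≤ r - s then (1:ℝ) else 0 := by positivity
          nlinarith [mul_nonneg (mul_nonneg (mul_nonneg (mul_nonneg (sub_nonneg.2 h4)
            (sq_nonneg (phi (t - r) R z))) h6) ht.le) ht.le]
      calc _ ≤ _ := hle
        _ = ((phi (t - r) R z) ^ 2 * t * (2 * t ^ 2)) * (2 * (r - s)) := by
            rw [MeasureTheory.integral_const_mul, indicator_integral z (r - s) hrs']
        _ ≤ _ := by
            have h1 := sq_nonneg (phi (t - r) R z)
            have hrst : r - s ≤ t := by linarith
            nlinarith [mul_nonneg (mul_nonneg (sub_nonneg.2 hrst) h1) (pow_nonneg ht.le 3)]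
    -- Step z
    have hle : (∫ z : ℝ, ∫ y' : ℝ, ∫ y : ℝ,
        (phi (t - r) R z) ^ 2 * phi (t - s) R y * phi (t - s) R y' *
          (if |y - z| ≤ r - s then (1:ℝ) else 0) *
          (if |y' - z| ≤ r - s then (1:ℝ) else 0))
        ≤ ∫ z : ℝ, (4 * t ^ 4) * (phi (t - r) R z) ^ 2 := by
      apply integral_mono_of_nonneg
      · refine Filter.Eventually.of_forall fun z => ?_
        apply MeasureTheory.integral_nonneg
        intro y'
        apply MeasureTheory.integral_nonneg
        intro y
        have := phi_nonneg (t - r) R z hR0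
        have := phi_nonneg (t - s) R y hR0
        have := phi_nonneg (t - s) R y' hR0
        positivity
      · exact (phi_sq_integrable (t - r) R hR0 htr).const_mul _
      · refine Filter.Eventually.of_forall fun z => ?_
        dsimp only
        calc _ ≤ (phi (t - r) R z) ^ 2 * (4 * t ^ 4) := step_y' z
          _ = (4 * t ^ 4) * (phi (t - r) R z) ^ 2 := mul_comm _ _
    calc _ ≤ _ := hle
      _ = (4 * t ^ 4) * ∫ z, (phi (t - r) R z) ^ 2 := MeasureTheory.integral_const_mul _ _
      _ ≤ (4 * t ^ 4) * (2 * R * (t - r) ^ 2) := by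
          apply mul_le_mul_of_nonneg_left (integral_phi_sq_le (t - r) R hR0 htr)
          positivity
      _ = G r := by rw [hG]; ring
  -- nonnegativity of F
  have hF_nonneg : ∀ r : ℝ, 0 ≤ (∫ z : ℝ, ∫ y' : ℝ, ∫ y : ℝ,
      (phi (t - r) R z) ^ 2 * phi (t - s) R y * phi (t - s) R y' *
        (if |y - z| ≤ r - s then (1:ℝ) else 0) *
        (if |y' - z| ≤ r - s then (1:ℝ) else 0)) := by
    intro r
    apply MeasureTheory.integral_nonneg; intro z
    apply MeasureTheory.integral_nonneg; intro y'
    apply MeasureTheory.integral_nonneg; intro y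
    have := phi_nonneg (t - r) R z hR0
    have := phi_nonneg (t - s) R y hR0
    have := phi_nonneg (t - s) R y' hR0
    positivity
  -- reduce to set integral on Ioc
  rw [intervalIntegral.integral_of_le hst]
  have hGint : IntegrableOn G (Set.Ioc s t) := by
    apply Continuous.integrableOn_Ioc
    continuity
  have hmono : (∫ r in Set.Ioc s t, (∫ z : ℝ, ∫ y' : ℝ, ∫ y : ℝ,
      (phi (t - r) R z) ^ 2 * phi (t - s) R y * phi (t - s) R y' *
        (if |y - z| ≤ r - s then (1:ℝ) else 0) *
        (if |y' - z| ≤ r - s then (1:ℝ) else 0)))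
      ≤ ∫ r in Set.Ioc s t, G r := by
    apply integral_mono_of_nonneg
    · exact Filter.Eventually.of_forall fun r => hF_nonneg r
    · exact hGint
    · filter_upwards [ae_restrict_mem measurableSet_Ioc] with r hr
      exact key r hr
  refine le_trans hmono ?_
  have hGval : ∫ r in Set.Ioc s t, G r = 8 * R * t ^ 4 * ((t - s) ^ 3 / 3) := by
    rw [← intervalIntegral.integral_of_le hst]
    simp only [hG]
    rw [intervalIntegral.integral_const_mul]
    congr 1
    have h := intervalIntegral.integral_comp_sub_left (a := s) (b := t) (fun x => x ^ 2) t
    rw [h, sub_self, integral_pow]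
    norm_num
  rw [hGval]
  have h1 : (t - s) ^ 3 ≤ t ^ 3 := pow_le_pow_left₀ (by linarith) (by linarith) 3
  nlinarith [mul_nonneg hR0 (sub_nonneg.2 h1), mul_nonneg (mul_nonneg hR0 (sub_nonneg.2 h1)) (pow_nonneg ht.le 4)]
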